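/- For every natural number $n$, the following identity holds in the polynomial ring $\mathbb{Q}[L,R]$ in two commuting variables: $(L-R)\,R^n = \sum_{k=0}^{n} \frac{a^{(n)}_k}{k+1}\,(L^{k+1} - R^{k+1})\,(L-R)^{n-k}$, where $a^{(n)}_k = \binom{n}{k} B_{n-k}$. -/

import Mathlib

open MvPolynomial

open Finset

lemma key_bern (n : ℕ) (x : ℚ) :
    ∑ k ∈ range (n + 1),
      (n.choose k : ℚ) * bernoulli (n - k) / (k + 1) * ((x + 1) ^ (k + 1) - x ^ (k + 1))
      = x ^ n := by
  have h := Polynomial.bernoulli_eval_one_add (n + 1) x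
  have hev : ∀ y : ℚ, (Polynomial.bernoulli (n + 1)).eval y
      = ∑ i ∈ range (n + 2), bernoulli (n + 1 - i) * (n + 1).choose i * y ^ i := by
    intro y
    rw [Polynomial.bernoulli_def]
    simp [Polynomial.eval_finset_sum]
  rw [hev, hev] at h
  have h2 : ∑ i ∈ range (n + 2),
      bernoulli (n + 1 - i) * (n + 1).choose i * ((1 + x) ^ i - x ^ i)
      = (n + 1 : ℚ) * x ^ n := by
    simp only [mul_sub]
    rw [Finset.sum_sub_distrib]
    push_cast at h ⊢
    linarith [h]
  rw [Finset.sum_range_succ'] at h2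
  simp only [pow_zero, sub_self, mul_zero, add_zero] at h2
  have hnz : (n + 1 : ℚ) ≠ 0 := by positivity
  apply mul_left_cancel₀ hnz
  rw [Finset.mul_sum, ← h2]
  apply Finset.sum_congr rfl
  intro k hk
  have hch : ((k : ℚ) + 1) * (n + 1).choose (k + 1) = ((n : ℚ) + 1) * n.choose k := by
    have h3 := Nat.add_one_mul_choose_eq n k
    have h4 : ((n + 1) * n.choose k : ℚ) = ((n + 1).choose (k + 1) * (k + 1) : ℚ) := by
      exact_mod_cast congrArg (fun m : ℕ => (m : ℚ)) h3
    linarith [h4]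
  have hsucc : n + 1 - (k + 1) = n - k := by omega
  rw [hsucc]
  have hk1 : ((k : ℚ) + 1) ≠ 0 := by positivity
  have hx : (1 + x) = (x + 1) := by ring
  rw [hx]
  field_simp
  linear_combination (-(bernoulli (n - k) * ((x + 1) ^ (k + 1) - x ^ (k + 1)))) * hch

lemma scalar2 (n : ℕ) (x d : ℚ) :
    ((x + 1) * d - x * d) * (x * d) ^ n
      = ∑ k ∈ range (n + 1),
          (n.choose k : ℚ) * bernoulli (n - k) / (k + 1) *
            ((((x + 1) * d) ^ (k + 1) - (x * d) ^ (k + 1)) * ((x + 1) * d - x * d) ^ (n - k)) := by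
  have hterm : ∀ k ∈ range (n + 1),
      (n.choose k : ℚ) * bernoulli (n - k) / (k + 1) *
        ((((x + 1) * d) ^ (k + 1) - (x * d) ^ (k + 1)) * ((x + 1) * d - x * d) ^ (n - k))
      = ((n.choose k : ℚ) * bernoulli (n - k) / (k + 1) *
          ((x + 1) ^ (k + 1) - x ^ (k + 1))) * d ^ (n + 1) := by
    intro k hk
    have hkn : k ≤ n := Nat.lt_succ_iff.mp (mem_range.mp hk)
    have hsub : (x + 1) * d - x * d = d := by ring
    rw [hsub, mul_pow, mul_pow]
    have hdp : d ^ (k + 1) * d ^ (n - k) = d ^ (n + 1) := by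
      rw [← pow_add]; congr 1; omega
    calc (n.choose k : ℚ) * bernoulli (n - k) / (k + 1) *
          (((x + 1) ^ (k + 1) * d ^ (k + 1) - x ^ (k + 1) * d ^ (k + 1)) * d ^ (n - k))
        = (n.choose k : ℚ) * bernoulli (n - k) / (k + 1) *
            ((x + 1) ^ (k + 1) - x ^ (k + 1)) * (d ^ (k + 1) * d ^ (n - k)) := by ring
      _ = _ := by rw [hdp]
  rw [Finset.sum_congr rfl hterm, ← Finset.sum_mul, key_bern]
  ring

/-- In `ℚ[L,R]` (two commuting variables), with `a^{(n)}_k = C(n,k) B_{n-k}`: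
`(L-R) R^n = ∑_{k=0}^n (a^{(n)}_k/(k+1)) (L^{k+1} - R^{k+1}) (L-R)^{n-k}`. -/
theorem stmt5 (n : ℕ) :
    let L : MvPolynomial Bool ℚ := X true
    let R : MvPolynomial Bool ℚ := X false
    (L - R) * R ^ n
      = ∑ k ∈ Finset.range (n + 1),
          C ((n.choose k : ℚ) * bernoulli (n - k) / (k + 1)) *
            ((L ^ (k + 1) - R ^ (k + 1)) * (L - R) ^ (n - k)) := by
  intro L R
  apply MvPolynomial.funext
  intro f
  simp only [map_sum, eval_mul, eval_sub, eval_pow, eval_X, eval_C, L, R]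
  rcases eq_or_ne (f true) (f false) with h | h
  · simp [h]
  · have hd : f true - f false ≠ 0 := sub_ne_zero.mpr h
    have key := scalar2 n (f false / (f true - f false)) (f true - f false)
    have e1 : f false / (f true - f false) * (f true - f false) = f false :=
      div_mul_cancel₀ _ hd
    have e2 : (f false / (f true - f false) + 1) * (f true - f false) = f true := by
      field_simp
      ring
    rw [e1, e2] at key
    exact key
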